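/- Let F : C → D be a full and essentially surjective k-linear tensor functor between essentially small rigid k-linear tensor categories. Then for any two k-linear functors N, N' : D → Mod_k, the lax-monoidal structure map λ_{N,N'} : F*N ⊗_C F*N' → F*(N ⊗_D N') of the restriction functor F* is an isomorphism. -/

import Mathlib

/-!
Statement 9: Let `F : C ⥤ D` be a full and essentially surjective `k`-linear tensor functor
between essentially small rigid `k`-linear tensor categories.  For any `k`-linear functors
`N, N' : D ⥤ Mod_k`, the lax-monoidal structure map
`λ_{N,N'} : F*N ⊗_C F*N' ⟶ F*(N ⊗_D N')`
of the restriction functor `F*` is an isomorphism.  Pointwise at `c`, with Day convolutions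
written as coends, `λ` sends a generator `[g, n, n']_{(u,v)}` (with `g : u ⊗ v ⟶ c`,
`n ∈ N(Fu)`, `n' ∈ N'(Fv)`) to `[μ_{u,v} ≫ F(g), n, n']_{(Fu,Fv)}`.

`k`-linear coends are computed as quotients of direct sums, via the unbundled
`CoendData` below.
-/

open CategoryTheory TensorProduct DirectSum MonoidalCategory

universe u

variable (k : Type u) [CommRing k]

/-- Unbundled data for a `k`-linear coend `∫^{c ∈ E} H(c,c)`. -/
structure CoendData (E : Type u) [Category.{u} E] : Type (u + 1) where
  obj : E → E → ModuleCat.{u} k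
  left : ∀ {c c' : E} (d : E), (c' ⟶ c) → (obj c d →ₗ[k] obj c' d)
  right : ∀ (c : E) {d d' : E}, (d ⟶ d') → (obj c d →ₗ[k] obj c d')

variable {k} {E : Type u} [Category.{u} E]

/-- The submodule of relations defining the coend. -/
noncomputable def CoendData.relations (H : CoendData k E) :
    Submodule k (⨁ c : E, (H.obj c c : Type u)) :=
  letI := Classical.decEq E
  Submodule.span k {z | ∃ (c c' : E) (α : c' ⟶ c) (y : H.obj c c'),
    z = DirectSum.lof k E (fun c => (H.obj c c : Type u)) c' (H.left c' α y)
      - DirectSum.lof k E (fun c => (H.obj c c : Type u)) c (H.right c α y)}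

/-- The `k`-linear coend `∫^{c} H(c,c)`. -/
noncomputable def CoendData.Coend (H : CoendData k E) : Type u :=
  (⨁ c : E, (H.obj c c : Type u)) ⧸ H.relations

noncomputable instance (H : CoendData k E) : AddCommGroup H.Coend :=
  inferInstanceAs (AddCommGroup ((⨁ c : E, (H.obj c c : Type u)) ⧸ H.relations))

noncomputable instance (H : CoendData k E) : Module k H.Coend :=
  inferInstanceAs (Module k ((⨁ c : E, (H.obj c c : Type u)) ⧸ H.relations))

/-- The generator `[x]_c` of the coend. -/
noncomputable def CoendData.gen (H : CoendData k E) (c : E) (x : H.obj c c) : H.Coend :=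
  letI := Classical.decEq E
  Submodule.Quotient.mk (DirectSum.lof k E (fun c => (H.obj c c : Type u)) c x)

section Lax

variable (k)
variable {C D : Type u} [Category.{u} C] [Category.{u} D]
  [Preadditive C] [Linear k C] [MonoidalCategory C] [SymmetricCategory C]
  [MonoidalPreadditive C] [MonoidalLinear k C] [RigidCategory C]
  [Preadditive D] [Linear k D] [MonoidalCategory D] [SymmetricCategory D]
  [MonoidalPreadditive D] [MonoidalLinear k D] [RigidCategory D]
  (F : C ⥤ D) [F.Additive] [F.Linear k] [F.Monoidal]

/-- Coend data computing `(F*N ⊗_C F*N')(c) = ∫^{(u,v)} C(u ⊗ v, c) ⊗ N(Fu) ⊗ N'(Fv)`. -/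
noncomputable def laxSrcData (N N' : D ⥤ ModuleCat.{u} k) (c : C) :
    CoendData k (C × C) where
  obj p q := ModuleCat.of k
    (((p.1 ⊗ p.2 : C) ⟶ c) ⊗[k]
      ((N.obj (F.obj q.1) : Type u) ⊗[k] (N'.obj (F.obj q.2) : Type u)))
  left q φ := TensorProduct.map (Linear.leftComp k c (φ.1 ⊗ₘ φ.2)) LinearMap.id
  right p {q q'} ψ := TensorProduct.map LinearMap.id
    (TensorProduct.map (N.map (F.map ψ.1)).hom (N'.map (F.map ψ.2)).hom)

/-- Coend data computing `F*(N ⊗_D N')(c) = ∫^{(x,y)} D(x ⊗ y, F c) ⊗ N(x) ⊗ N'(y)`. -/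
noncomputable def laxTgtData (N N' : D ⥤ ModuleCat.{u} k) (c : C) :
    CoendData k (D × D) where
  obj p q := ModuleCat.of k
    (((p.1 ⊗ p.2 : D) ⟶ F.obj c) ⊗[k]
      ((N.obj q.1 : Type u) ⊗[k] (N'.obj q.2 : Type u)))
  left q φ := TensorProduct.map (Linear.leftComp k (F.obj c) (φ.1 ⊗ₘ φ.2)) LinearMap.id
  right p {q q'} ψ := TensorProduct.map LinearMap.id
    (TensorProduct.map (N.map ψ.1).hom (N'.map ψ.2).hom)

section StatementNineAux

namespace CoendData

variable {k}

/-- The generator map as a linear map. -/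
noncomputable def genL (H : CoendData k E) (i : E) : (H.obj i i : Type u) →ₗ[k] H.Coend :=
  letI := Classical.decEq E
  H.relations.mkQ.comp (DirectSum.lof k E (fun c => (H.obj c c : Type u)) i)

lemma gen_eq_genL (H : CoendData k E) (i : E) (x : H.obj i i) :
    H.gen i x = H.genL i x := rfl

lemma gen_rel (H : CoendData k E) {p q : E} (α : q ⟶ p) (y : H.obj p q) :
    H.gen q (H.left q α y) = H.gen p (H.right p α y) := by
  letI := Classical.decEq E
  refine (Submodule.Quotient.eq _).2 ?_
  exact Submodule.subset_span ⟨p, q, α, y, rfl⟩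

/-- Descend a compatible family of linear maps to the coend. -/
noncomputable def desc (H : CoendData k E) {M : Type u} [AddCommGroup M] [Module k M]
    (f : ∀ i : E, (H.obj i i : Type u) →ₗ[k] M)
    (hf : ∀ {p q : E} (α : q ⟶ p) (y : H.obj p q),
      f q (H.left q α y) = f p (H.right p α y)) :
    H.Coend →ₗ[k] M :=
  letI := Classical.decEq E
  Submodule.liftQ H.relations (DirectSum.toModule k E M f) (by
    unfold CoendData.relations
    rw [Submodule.span_le]
    rintro z ⟨p, q, α, y, rfl⟩
    simp only [SetLike.mem_coe, LinearMap.mem_ker, map_sub, DirectSum.toModule_lof,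
      hf α y, sub_self])

@[simp] lemma desc_gen (H : CoendData k E) {M : Type u} [AddCommGroup M] [Module k M]
    (f : ∀ i : E, (H.obj i i : Type u) →ₗ[k] M)
    (hf : ∀ {p q : E} (α : q ⟶ p) (y : H.obj p q),
      f q (H.left q α y) = f p (H.right p α y))
    (i : E) (x : H.obj i i) :
    H.desc f hf (H.gen i x) = f i x := by
  letI := Classical.decEq E
  show Submodule.liftQ _ _ _ (Submodule.Quotient.mk _) = _
  rw [Submodule.liftQ_apply, DirectSum.toModule_lof]

lemma hom_ext' (H : CoendData k E) {M : Type u} [AddCommGroup M] [Module k M]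
    {f g : H.Coend →ₗ[k] M}
    (h : ∀ i : E, f.comp (H.genL i) = g.comp (H.genL i)) : f = g := by
  letI := Classical.decEq E
  refine Submodule.linearMap_qext _ (DirectSum.linearMap_ext _ fun i => ?_)
  exact h i

end CoendData

section AuxDefs

variable [F.Full] [F.EssSurj]
variable (N N' : D ⥤ ModuleCat.{u} k) [N.Additive] [N.Linear k] [N'.Additive] [N'.Linear k]
variable (c : C)

/-- A chosen preimage object under `F`. -/
noncomputable def preC (x : D) : C := F.objPreimage x

/-- The canonical iso `F (preC x) ≅ x`. -/
noncomputable def epsIso (x : D) : F.obj (preC F x) ≅ x := F.objObjPreimageIso x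

/- Linearity helpers for source generators. -/
lemma sgen_tmul_zero (uv : C × C) (g : (uv.1 ⊗ uv.2 : C) ⟶ c) :
    (laxSrcData k F N N' c).gen uv
      (g ⊗ₜ (0 : (N.obj (F.obj uv.1) : Type u) ⊗[k] (N'.obj (F.obj uv.2) : Type u))) = 0 :=
  (congrArg _ (TensorProduct.tmul_zero _ g)).trans
    (map_zero ((laxSrcData k F N N' c).genL uv))

lemma sgen_tmul_add (uv : C × C) (g : (uv.1 ⊗ uv.2 : C) ⟶ c)
    (a b : (N.obj (F.obj uv.1) : Type u) ⊗[k] (N'.obj (F.obj uv.2) : Type u)) :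
    (laxSrcData k F N N' c).gen uv (g ⊗ₜ (a + b))
      = (laxSrcData k F N N' c).gen uv (g ⊗ₜ a)
        + (laxSrcData k F N N' c).gen uv (g ⊗ₜ b) :=
  (congrArg _ (TensorProduct.tmul_add g a b)).trans
    (map_add ((laxSrcData k F N N' c).genL uv) _ _)

lemma sgen_add_tmul (uv : C × C) (g g' : (uv.1 ⊗ uv.2 : C) ⟶ c)
    (t : (N.obj (F.obj uv.1) : Type u) ⊗[k] (N'.obj (F.obj uv.2) : Type u)) :
    (laxSrcData k F N N' c).gen uv ((g + g') ⊗ₜ t)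
      = (laxSrcData k F N N' c).gen uv (g ⊗ₜ t)
        + (laxSrcData k F N N' c).gen uv (g' ⊗ₜ t) :=
  (congrArg _ (TensorProduct.add_tmul g g' t)).trans
    (map_add ((laxSrcData k F N N' c).genL uv) _ _)

lemma sgen_sub_tmul (uv : C × C) (g g' : (uv.1 ⊗ uv.2 : C) ⟶ c)
    (t : (N.obj (F.obj uv.1) : Type u) ⊗[k] (N'.obj (F.obj uv.2) : Type u)) :
    (laxSrcData k F N N' c).gen uv ((g - g') ⊗ₜ t)
      = (laxSrcData k F N N' c).gen uv (g ⊗ₜ t)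
        - (laxSrcData k F N N' c).gen uv (g' ⊗ₜ t) :=
  (congrArg _ (TensorProduct.sub_tmul g g' t)).trans
    (map_sub ((laxSrcData k F N N' c).genL uv) _ _)

lemma sgen_smul_tmul (uv : C × C) (r : k) (g : (uv.1 ⊗ uv.2 : C) ⟶ c)
    (t : (N.obj (F.obj uv.1) : Type u) ⊗[k] (N'.obj (F.obj uv.2) : Type u)) :
    (laxSrcData k F N N' c).gen uv ((r • g) ⊗ₜ t)
      = r • (laxSrcData k F N N' c).gen uv (g ⊗ₜ t) :=
  (congrArg _ (TensorProduct.smul_tmul' r g t).symm).trans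
    (map_smul ((laxSrcData k F N N' c).genL uv) r _)

lemma sgen_tmul_smul (uv : C × C) (r : k) (g : (uv.1 ⊗ uv.2 : C) ⟶ c)
    (t : (N.obj (F.obj uv.1) : Type u) ⊗[k] (N'.obj (F.obj uv.2) : Type u)) :
    (laxSrcData k F N N' c).gen uv (g ⊗ₜ (r • t))
      = r • (laxSrcData k F N N' c).gen uv (g ⊗ₜ t) :=
  (congrArg _ (TensorProduct.tmul_smul r g t)).trans
    (map_smul ((laxSrcData k F N N' c).genL uv) r _)

/-- The component of the lax structure map. -/
noncomputable def Lcomp (uv : C × C) :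
    ((laxSrcData k F N N' c).obj uv uv : Type u) →ₗ[k] (laxTgtData k F N N' c).Coend :=
  ((laxTgtData k F N N' c).genL (F.obj uv.1, F.obj uv.2)).comp
    (TensorProduct.map
      ((Linear.leftComp k (F.obj c) (Functor.LaxMonoidal.μ F uv.1 uv.2)).comp
        (F.mapLinearMap k))
      LinearMap.id)

lemma Lcomp_tmul (uv : C × C) (g : (uv.1 ⊗ uv.2 : C) ⟶ c)
    (t : (N.obj (F.obj uv.1) : Type u) ⊗[k] (N'.obj (F.obj uv.2) : Type u)) :
    Lcomp k F N N' c uv (g ⊗ₜ t) =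
      (laxTgtData k F N N' c).gen (F.obj uv.1, F.obj uv.2)
        ((Functor.LaxMonoidal.μ F uv.1 uv.2 ≫ F.map g) ⊗ₜ t) := rfl

/-- The pure-tensor form of the source relations. -/
lemma src_rel {p q : C × C} (α : q ⟶ p) (g : (p.1 ⊗ p.2 : C) ⟶ c)
    (t : (N.obj (F.obj q.1) : Type u) ⊗[k] (N'.obj (F.obj q.2) : Type u)) :
    (laxSrcData k F N N' c).gen q (((α.1 ⊗ₘ α.2) ≫ g) ⊗ₜ t) =
      (laxSrcData k F N N' c).gen p
        (g ⊗ₜ TensorProduct.map (N.map (F.map α.1)).hom (N'.map (F.map α.2)).hom t) :=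
  (laxSrcData k F N N' c).gen_rel α (g ⊗ₜ t)

/-- The pure-tensor form of the target relations. -/
lemma tgt_rel {p q : D × D} (β : q ⟶ p) (h : (p.1 ⊗ p.2 : D) ⟶ F.obj c)
    (t : (N.obj q.1 : Type u) ⊗[k] (N'.obj q.2 : Type u)) :
    (laxTgtData k F N N' c).gen q (((β.1 ⊗ₘ β.2) ≫ h) ⊗ₜ t) =
      (laxTgtData k F N N' c).gen p
        (h ⊗ₜ TensorProduct.map (N.map β.1).hom (N'.map β.2).hom t) :=
  (laxTgtData k F N N' c).gen_rel β (h ⊗ₜ t)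

/-- Key rigidity lemma: source generators whose hom-part is killed by `F` vanish. -/
lemma src_gen_zero (u v : C) (g : (u ⊗ v : C) ⟶ c) (hg : F.map g = 0)
    (t : (N.obj (F.obj u) : Type u) ⊗[k] (N'.obj (F.obj v) : Type u)) :
    (laxSrcData k F N N' c).gen (u, v) (g ⊗ₜ t) = 0 := by
  induction t using TensorProduct.induction_on with
  | zero => exact sgen_tmul_zero k F N N' c (u, v) g
  | add a b ha hb => rw [sgen_tmul_add k F N N' c (u, v) g a b, ha, hb, add_zero]
  | tmul n n' =>
      have hwhisk : F.map ((ᘁu : C) ◁ g) = 0 := by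
        have hnat := Functor.LaxMonoidal.μ_natural_right (F := F) (ᘁu : C) g
        rw [hg] at hnat
        simp only [MonoidalPreadditive.whiskerLeft_zero, Limits.zero_comp] at hnat
        exact (cancel_epi (Functor.LaxMonoidal.μ F (ᘁu : C) (u ⊗ v))).1
          (by rw [← hnat, Limits.comp_zero])
      have hFg0 : F.map ((tensorLeftHomEquiv v (ᘁu) u c) g) = 0 := by
        have hsplit : (tensorLeftHomEquiv v (ᘁu) u c) g
            = (λ_ v).inv ≫ (η_ (ᘁu : C) u) ▷ v ≫ (α_ (ᘁu : C) u v).hom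
              ≫ ((ᘁu : C) ◁ g) := rfl
        rw [hsplit, F.map_comp, F.map_comp, F.map_comp, hwhisk, Limits.comp_zero,
          Limits.comp_zero, Limits.comp_zero]
      have hzig : ((𝟙 u ⊗ₘ (tensorLeftHomEquiv v (ᘁu) u c) g)
            ≫ (tensorLeftHomEquiv ((ᘁu : C) ⊗ c) (ᘁu) u c).symm (𝟙 _)) = g := by
        rw [MonoidalCategory.id_tensorHom]
        have hnat := tensorLeftHomEquiv_symm_naturality (Y' := u)
          (f := (tensorLeftHomEquiv v (ᘁu) u c) g) (g := 𝟙 ((ᘁu : C) ⊗ c))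
        rw [Category.comp_id] at hnat
        rw [← hnat, Equiv.symm_apply_apply]
      have hrel := src_rel k F N N' c
        (p := (u, (ᘁu : C) ⊗ c)) (q := (u, v))
        ((𝟙 u, (tensorLeftHomEquiv v (ᘁu) u c) g) :
          ((u, v) : C × C) ⟶ (u, (ᘁu : C) ⊗ c))
        ((tensorLeftHomEquiv ((ᘁu : C) ⊗ c) (ᘁu) u c).symm (𝟙 _)) (n ⊗ₜ n')
      rw [hzig] at hrel
      rw [hrel, TensorProduct.map_tmul, hFg0]
      have hz : (N'.map (0 : F.obj v ⟶ F.obj ((ᘁu : C) ⊗ c))).hom n' = 0 := by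
        rw [N'.map_zero]; rfl
      rw [hz, TensorProduct.tmul_zero]
      exact sgen_tmul_zero k F N N' c _ _

lemma src_gen_congr (u v : C) (g g' : (u ⊗ v : C) ⟶ c) (hgg : F.map g = F.map g')
    (t : (N.obj (F.obj u) : Type u) ⊗[k] (N'.obj (F.obj v) : Type u)) :
    (laxSrcData k F N N' c).gen (u, v) (g ⊗ₜ t)
      = (laxSrcData k F N N' c).gen (u, v) (g' ⊗ₜ t) := by
  have h0 : F.map (g - g') = 0 := by rw [F.map_sub, hgg, sub_self]
  have hz := src_gen_zero k F N N' c u v (g - g') h0 t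
  rw [sgen_sub_tmul k F N N' c (u, v) g g' t, sub_eq_zero] at hz
  exact hz

lemma Lrel {p q : C × C} (α : q ⟶ p)
    (y : ((laxSrcData k F N N' c).obj p q : Type u)) :
    Lcomp k F N N' c q ((laxSrcData k F N N' c).left q α y)
      = Lcomp k F N N' c p ((laxSrcData k F N N' c).right p α y) := by
  have hmaps : (Lcomp k F N N' c q).comp ((laxSrcData k F N N' c).left q α)
        = (Lcomp k F N N' c p).comp ((laxSrcData k F N N' c).right p α) := by
    apply TensorProduct.ext'
    intro g t
    show Lcomp k F N N' c q ((laxSrcData k F N N' c).left q α (g ⊗ₜ t))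
      = Lcomp k F N N' c p ((laxSrcData k F N N' c).right p α (g ⊗ₜ t))
    have hL : (laxSrcData k F N N' c).left q α (g ⊗ₜ t)
        = ((α.1 ⊗ₘ α.2) ≫ g) ⊗ₜ t := rfl
    have hR : (laxSrcData k F N N' c).right p α (g ⊗ₜ t)
        = g ⊗ₜ TensorProduct.map (N.map (F.map α.1)).hom (N'.map (F.map α.2)).hom t := rfl
    rw [hL, hR, Lcomp_tmul, Lcomp_tmul]
    have hrel := tgt_rel k F N N' c
      (p := (F.obj p.1, F.obj p.2)) (q := (F.obj q.1, F.obj q.2))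
      ((F.map α.1, F.map α.2) :
        ((F.obj q.1, F.obj q.2) : D × D) ⟶ (F.obj p.1, F.obj p.2))
      (Functor.LaxMonoidal.μ F p.1 p.2 ≫ F.map g) t
    have hμ : (F.map α.1 ⊗ₘ F.map α.2) ≫ Functor.LaxMonoidal.μ F p.1 p.2 ≫ F.map g
        = Functor.LaxMonoidal.μ F q.1 q.2 ≫ F.map ((α.1 ⊗ₘ α.2) ≫ g) := by
      rw [F.map_comp, ← Category.assoc, Functor.LaxMonoidal.μ_natural, Category.assoc]
    rw [hμ] at hrel
    exact hrel
  exact LinearMap.congr_fun hmaps y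

/-- The lax structure map. -/
noncomputable def Lmap :
    (laxSrcData k F N N' c).Coend →ₗ[k] (laxTgtData k F N N' c).Coend :=
  (laxSrcData k F N N' c).desc (Lcomp k F N N' c)
    (fun {p q} α y => Lrel k F N N' c α y)

lemma Lmap_gen (uv : C × C) (g : (uv.1 ⊗ uv.2 : C) ⟶ c)
    (t : (N.obj (F.obj uv.1) : Type u) ⊗[k] (N'.obj (F.obj uv.2) : Type u)) :
    Lmap k F N N' c ((laxSrcData k F N N' c).gen uv (g ⊗ₜ t)) =
      (laxTgtData k F N N' c).gen (F.obj uv.1, F.obj uv.2)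
        ((Functor.LaxMonoidal.μ F uv.1 uv.2 ≫ F.map g) ⊗ₜ t) := by
  have h0 : Lmap k F N N' c ((laxSrcData k F N N' c).gen uv (g ⊗ₜ t))
      = Lcomp k F N N' c uv (g ⊗ₜ t) :=
    CoendData.desc_gen _ (Lcomp k F N N' c)
      (fun {p q} α y => Lrel k F N N' c α y) uv (g ⊗ₜ t)
  rw [h0, Lcomp_tmul]

/-- Conjugation of a morphism `x ⊗ y ⟶ F c` to a morphism out of `F (preC x ⊗ preC y)`. -/
noncomputable def conjMap (x y : D) :
    ((x ⊗ y : D) ⟶ F.obj c) →ₗ[k] (F.obj (preC F x ⊗ preC F y) ⟶ F.obj c) :=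
  Linear.leftComp k (F.obj c)
    (Functor.OplaxMonoidal.δ F (preC F x) (preC F y)
      ≫ ((epsIso F x).hom ⊗ₘ (epsIso F y).hom))

lemma conjMap_apply (x y : D) (h : (x ⊗ y : D) ⟶ F.obj c) :
    conjMap k F c x y h
      = (Functor.OplaxMonoidal.δ F (preC F x) (preC F y)
          ≫ ((epsIso F x).hom ⊗ₘ (epsIso F y).hom)) ≫ h := rfl

/-- Transport of tensor elements along the isos `epsIso`. -/
noncomputable def transp (x y : D) :
    ((N.obj x : Type u) ⊗[k] (N'.obj y : Type u)) →ₗ[k]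
      ((N.obj (F.obj (preC F x)) : Type u) ⊗[k] (N'.obj (F.obj (preC F y)) : Type u)) :=
  TensorProduct.map (N.map (epsIso F x).inv).hom (N'.map (epsIso F y).inv).hom

lemma transp_section (x y : D)
    (t : (N.obj x : Type u) ⊗[k] (N'.obj y : Type u)) :
    TensorProduct.map (N.map (epsIso F x).hom).hom (N'.map (epsIso F y).hom).hom
      (transp k F N N' x y t) = t := by
  induction t using TensorProduct.induction_on with
  | zero => simp only [map_zero]
  | add a b ha hb => simp only [map_add, ha, hb]
  | tmul n n' =>
      have h0 : transp k F N N' x y (n ⊗ₜ n')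
          = ((N.map (epsIso F x).inv).hom n) ⊗ₜ ((N'.map (epsIso F y).inv).hom n') := rfl
      rw [h0, TensorProduct.map_tmul]
      congr 1
      · have h1 : (N.map (epsIso F x).hom).hom ((N.map (epsIso F x).inv).hom n)
            = (N.map ((epsIso F x).inv ≫ (epsIso F x).hom)).hom n := by
          rw [N.map_comp]; rfl
        rw [h1, Iso.inv_hom_id, N.map_id]; rfl
      · have h1 : (N'.map (epsIso F y).hom).hom ((N'.map (epsIso F y).inv).hom n')
            = (N'.map ((epsIso F y).inv ≫ (epsIso F y).hom)).hom n' := by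
          rw [N'.map_comp]; rfl
        rw [h1, Iso.inv_hom_id, N'.map_id]; rfl

/-- Bilinear map underlying the inverse, before descending through `F.map`. -/
noncomputable def bilin (x y : D) :
    ((preC F x ⊗ preC F y : C) ⟶ c) →ₗ[k]
      ((N.obj x : Type u) ⊗[k] (N'.obj y : Type u)) →ₗ[k]
        (laxSrcData k F N N' c).Coend :=
  LinearMap.mk₂ k
    (fun g t => (laxSrcData k F N N' c).gen (preC F x, preC F y)
      (g ⊗ₜ transp k F N N' x y t))
    (fun g g' t => sgen_add_tmul k F N N' c (preC F x, preC F y) g g' _)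
    (fun r g t => sgen_smul_tmul k F N N' c (preC F x, preC F y) r g _)
    (fun g t t' => by
      show (laxSrcData k F N N' c).gen (preC F x, preC F y)
            (g ⊗ₜ transp k F N N' x y (t + t'))
          = (laxSrcData k F N N' c).gen (preC F x, preC F y)
              (g ⊗ₜ transp k F N N' x y t)
            + (laxSrcData k F N N' c).gen (preC F x, preC F y)
              (g ⊗ₜ transp k F N N' x y t')
      rw [map_add (transp k F N N' x y) t t']
      exact sgen_tmul_add k F N N' c (preC F x, preC F y) g _ _)
    (fun r g t => by
      show (laxSrcData k F N N' c).gen (preC F x, preC F y)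
            (g ⊗ₜ transp k F N N' x y (r • t))
          = r • (laxSrcData k F N N' c).gen (preC F x, preC F y)
              (g ⊗ₜ transp k F N N' x y t)
      rw [map_smul (transp k F N N' x y) r t]
      exact sgen_tmul_smul k F N N' c (preC F x, preC F y) r g _)

lemma bilin_apply (x y : D) (g : (preC F x ⊗ preC F y : C) ⟶ c)
    (t : (N.obj x : Type u) ⊗[k] (N'.obj y : Type u)) :
    bilin k F N N' c x y g t
      = (laxSrcData k F N N' c).gen (preC F x, preC F y)
          (g ⊗ₜ transp k F N N' x y t) := rfl

lemma bilin_ker (x y : D) (g : (preC F x ⊗ preC F y : C) ⟶ c) (hgz : F.map g = 0) :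
    bilin k F N N' c x y g = 0 := by
  refine LinearMap.ext fun t => ?_
  rw [bilin_apply]
  exact src_gen_zero k F N N' c _ _ g hgz _

/-- `F.map` as a linear map on hom modules into `c`. -/
noncomputable def FmapL (w : C) : (w ⟶ c) →ₗ[k] (F.obj w ⟶ F.obj c) :=
  F.mapLinearMap k

lemma FmapL_surj (w : C) : Function.Surjective ⇑(FmapL k F c w) :=
  fun h => F.map_surjective h

/-- First isomorphism theorem applied to `F.map` on hom modules. -/
noncomputable def quotEquiv (w : C) :
    ((w ⟶ c) ⧸ LinearMap.ker (FmapL k F c w)) ≃ₗ[k] (F.obj w ⟶ F.obj c) :=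
  LinearMap.quotKerEquivOfSurjective _ (FmapL_surj k F c w)

lemma quotEquiv_mk (w : C) (g : w ⟶ c) :
    quotEquiv k F c w (Submodule.Quotient.mk g) = F.map g := rfl

lemma bilin_ker_le (x y : D) :
    LinearMap.ker (FmapL k F c (preC F x ⊗ preC F y))
      ≤ LinearMap.ker (bilin k F N N' c x y) := fun g hgz => by
  rw [LinearMap.mem_ker] at hgz ⊢
  exact bilin_ker k F N N' c x y g hgz

/-- The descent of `bilin` through `F.map`. -/
noncomputable def bilin' (x y : D) :
    (F.obj (preC F x ⊗ preC F y) ⟶ F.obj c) →ₗ[k]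
      ((N.obj x : Type u) ⊗[k] (N'.obj y : Type u)) →ₗ[k]
        (laxSrcData k F N N' c).Coend :=
  (Submodule.liftQ (LinearMap.ker (FmapL k F c (preC F x ⊗ preC F y)))
      (bilin k F N N' c x y) (bilin_ker_le k F N N' c x y)).comp
    (quotEquiv k F c (preC F x ⊗ preC F y)).symm.toLinearMap

lemma bilin'_Fmap (x y : D) (g : (preC F x ⊗ preC F y : C) ⟶ c) :
    bilin' k F N N' c x y (F.map g) = bilin k F N N' c x y g := by
  have h1 : (quotEquiv k F c (preC F x ⊗ preC F y)).symm (F.map g)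
      = Submodule.Quotient.mk g := by
    apply (quotEquiv k F c (preC F x ⊗ preC F y)).injective
    rw [LinearEquiv.apply_symm_apply, quotEquiv_mk]
  have h2 : bilin' k F N N' c x y (F.map g)
      = Submodule.liftQ (LinearMap.ker (FmapL k F c (preC F x ⊗ preC F y)))
          (bilin k F N N' c x y) (bilin_ker_le k F N N' c x y)
          ((quotEquiv k F c (preC F x ⊗ preC F y)).symm (F.map g)) := rfl
  rw [h2, h1, Submodule.liftQ_apply]

/-- The component of the inverse map. -/
noncomputable def Rcomp (xy : D × D) :
    ((laxTgtData k F N N' c).obj xy xy : Type u) →ₗ[k] (laxSrcData k F N N' c).Coend :=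
  TensorProduct.lift ((bilin' k F N N' c xy.1 xy.2).comp (conjMap k F c xy.1 xy.2))

lemma Rcomp_eq (xy : D × D) (h : (xy.1 ⊗ xy.2 : D) ⟶ F.obj c)
    (g : (preC F xy.1 ⊗ preC F xy.2 : C) ⟶ c)
    (hg : F.map g = conjMap k F c xy.1 xy.2 h)
    (t : (N.obj xy.1 : Type u) ⊗[k] (N'.obj xy.2 : Type u)) :
    Rcomp k F N N' c xy (h ⊗ₜ t) =
      (laxSrcData k F N N' c).gen (preC F xy.1, preC F xy.2)
        (g ⊗ₜ transp k F N N' xy.1 xy.2 t) := by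
  have h0 : Rcomp k F N N' c xy (h ⊗ₜ t)
      = bilin' k F N N' c xy.1 xy.2 (conjMap k F c xy.1 xy.2 h) t := rfl
  rw [h0, ← hg, bilin'_Fmap, bilin_apply]

lemma conj_natural {p q : D × D} (β : q ⟶ p) (h : (p.1 ⊗ p.2 : D) ⟶ F.obj c)
    (γ₁ : preC F q.1 ⟶ preC F p.1) (γ₂ : preC F q.2 ⟶ preC F p.2)
    (h₁ : F.map γ₁ = (epsIso F q.1).hom ≫ β.1 ≫ (epsIso F p.1).inv)
    (h₂ : F.map γ₂ = (epsIso F q.2).hom ≫ β.2 ≫ (epsIso F p.2).inv)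
    (g : (preC F p.1 ⊗ preC F p.2 : C) ⟶ c)
    (hgp : F.map g = conjMap k F c p.1 p.2 h) :
    F.map ((γ₁ ⊗ₘ γ₂) ≫ g) = conjMap k F c q.1 q.2 ((β.1 ⊗ₘ β.2) ≫ h) := by
  have hmu : F.map (γ₁ ⊗ₘ γ₂)
      = Functor.OplaxMonoidal.δ F (preC F q.1) (preC F q.2)
        ≫ (F.map γ₁ ⊗ₘ F.map γ₂)
        ≫ Functor.LaxMonoidal.μ F (preC F p.1) (preC F p.2) := by
    rw [Functor.LaxMonoidal.μ_natural, Functor.Monoidal.δ_μ_assoc]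
  have hcompat : (F.map γ₁ ⊗ₘ F.map γ₂) ≫ ((epsIso F p.1).hom ⊗ₘ (epsIso F p.2).hom)
      = ((epsIso F q.1).hom ⊗ₘ (epsIso F q.2).hom) ≫ (β.1 ⊗ₘ β.2) := by
    rw [MonoidalCategory.tensorHom_comp_tensorHom, MonoidalCategory.tensorHom_comp_tensorHom, h₁, h₂]
    simp
  rw [F.map_comp, hmu, hgp, conjMap_apply, conjMap_apply]
  rw [Category.assoc, Category.assoc, Category.assoc, Functor.Monoidal.μ_δ_assoc,
    ← Category.assoc (F.map γ₁ ⊗ₘ F.map γ₂), hcompat]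
  simp only [Category.assoc]

lemma transp_natural {x y x' y' : D} (β₁ : x ⟶ x') (β₂ : y ⟶ y')
    (γ₁ : preC F x ⟶ preC F x') (γ₂ : preC F y ⟶ preC F y')
    (h₁ : F.map γ₁ = (epsIso F x).hom ≫ β₁ ≫ (epsIso F x').inv)
    (h₂ : F.map γ₂ = (epsIso F y).hom ≫ β₂ ≫ (epsIso F y').inv)
    (t : (N.obj x : Type u) ⊗[k] (N'.obj y : Type u)) :
    TensorProduct.map (N.map (F.map γ₁)).hom (N'.map (F.map γ₂)).hom (transp k F N N' x y t)
      = transp k F N N' x' y' (TensorProduct.map (N.map β₁).hom (N'.map β₂).hom t) := by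
  induction t using TensorProduct.induction_on with
  | zero => simp only [map_zero]
  | add a b ha hb => simp only [map_add, ha, hb]
  | tmul n n' =>
      have e0 : transp k F N N' x y (n ⊗ₜ n')
          = ((N.map (epsIso F x).inv).hom n) ⊗ₜ ((N'.map (epsIso F y).inv).hom n') := rfl
      have e0' : transp k F N N' x' y'
            (TensorProduct.map (N.map β₁).hom (N'.map β₂).hom (n ⊗ₜ n'))
          = ((N.map (epsIso F x').inv).hom ((N.map β₁).hom n))
              ⊗ₜ ((N'.map (epsIso F y').inv).hom ((N'.map β₂).hom n')) := rfl
      rw [e0, e0', TensorProduct.map_tmul]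
      congr 1
      · have e1 : (N.map (F.map γ₁)).hom ((N.map (epsIso F x).inv).hom n)
            = (N.map ((epsIso F x).inv ≫ F.map γ₁)).hom n := by
          rw [N.map_comp]; rfl
        have e2 : (N.map (epsIso F x').inv).hom ((N.map β₁).hom n)
            = (N.map (β₁ ≫ (epsIso F x').inv)).hom n := by
          rw [N.map_comp]; rfl
        rw [e1, e2, h₁, Iso.inv_hom_id_assoc]
      · have e1 : (N'.map (F.map γ₂)).hom ((N'.map (epsIso F y).inv).hom n')
            = (N'.map ((epsIso F y).inv ≫ F.map γ₂)).hom n' := by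
          rw [N'.map_comp]; rfl
        have e2 : (N'.map (epsIso F y').inv).hom ((N'.map β₂).hom n')
            = (N'.map (β₂ ≫ (epsIso F y').inv)).hom n' := by
          rw [N'.map_comp]; rfl
        rw [e1, e2, h₂, Iso.inv_hom_id_assoc]

lemma Rrel {p q : D × D} (β : q ⟶ p)
    (y : ((laxTgtData k F N N' c).obj p q : Type u)) :
    Rcomp k F N N' c q ((laxTgtData k F N N' c).left q β y)
      = Rcomp k F N N' c p ((laxTgtData k F N N' c).right p β y) := by
  have hmaps : (Rcomp k F N N' c q).comp ((laxTgtData k F N N' c).left q β)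
      = (Rcomp k F N N' c p).comp ((laxTgtData k F N N' c).right p β) := by
    apply TensorProduct.ext'
    intro h t
    show Rcomp k F N N' c q ((laxTgtData k F N N' c).left q β (h ⊗ₜ t))
      = Rcomp k F N N' c p ((laxTgtData k F N N' c).right p β (h ⊗ₜ t))
    have hL : (laxTgtData k F N N' c).left q β (h ⊗ₜ t)
        = ((β.1 ⊗ₘ β.2) ≫ h) ⊗ₜ t := rfl
    have hR : (laxTgtData k F N N' c).right p β (h ⊗ₜ t)
        = h ⊗ₜ TensorProduct.map (N.map β.1).hom (N'.map β.2).hom t := rfl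
    rw [hL, hR]
    set γ₁ : preC F q.1 ⟶ preC F p.1
      := F.preimage ((epsIso F q.1).hom ≫ β.1 ≫ (epsIso F p.1).inv) with hγ₁
    set γ₂ : preC F q.2 ⟶ preC F p.2
      := F.preimage ((epsIso F q.2).hom ≫ β.2 ≫ (epsIso F p.2).inv) with hγ₂
    set gp : (preC F p.1 ⊗ preC F p.2 : C) ⟶ c
      := F.preimage (conjMap k F c p.1 p.2 h) with hgp
    have hFgp : F.map gp = conjMap k F c p.1 p.2 h := F.map_preimage _
    have key : F.map ((γ₁ ⊗ₘ γ₂) ≫ gp) = conjMap k F c q.1 q.2 ((β.1 ⊗ₘ β.2) ≫ h) :=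
      conj_natural k F c β h γ₁ γ₂ (F.map_preimage _) (F.map_preimage _) gp hFgp
    rw [Rcomp_eq k F N N' c q ((β.1 ⊗ₘ β.2) ≫ h) ((γ₁ ⊗ₘ γ₂) ≫ gp) key t,
      Rcomp_eq k F N N' c p h gp hFgp _]
    have hFγ₁ : F.map γ₁ = (epsIso F q.1).hom ≫ β.1 ≫ (epsIso F p.1).inv :=
      F.map_preimage _
    have hFγ₂ : F.map γ₂ = (epsIso F q.2).hom ≫ β.2 ≫ (epsIso F p.2).inv :=
      F.map_preimage _
    have hrel := src_rel k F N N' c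
      (p := (preC F p.1, preC F p.2)) (q := (preC F q.1, preC F q.2))
      ((γ₁, γ₂) : ((preC F q.1, preC F q.2) : C × C) ⟶ (preC F p.1, preC F p.2))
      gp (transp k F N N' q.1 q.2 t)
    rw [hrel, transp_natural k F N N' β.1 β.2 γ₁ γ₂ hFγ₁ hFγ₂ t]
  exact LinearMap.congr_fun hmaps y

/-- The inverse of the lax structure map. -/
noncomputable def Rmap :
    (laxTgtData k F N N' c).Coend →ₗ[k] (laxSrcData k F N N' c).Coend :=
  (laxTgtData k F N N' c).desc (Rcomp k F N N' c)
    (fun {p q} β y => Rrel k F N N' c β y)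

lemma Rmap_gen (xy : D × D) (h : (xy.1 ⊗ xy.2 : D) ⟶ F.obj c)
    (g : (preC F xy.1 ⊗ preC F xy.2 : C) ⟶ c)
    (hg : F.map g = conjMap k F c xy.1 xy.2 h)
    (t : (N.obj xy.1 : Type u) ⊗[k] (N'.obj xy.2 : Type u)) :
    Rmap k F N N' c ((laxTgtData k F N N' c).gen xy (h ⊗ₜ t)) =
      (laxSrcData k F N N' c).gen (preC F xy.1, preC F xy.2)
        (g ⊗ₜ transp k F N N' xy.1 xy.2 t) := by
  have h0 : Rmap k F N N' c ((laxTgtData k F N N' c).gen xy (h ⊗ₜ t))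
      = Rcomp k F N N' c xy (h ⊗ₜ t) :=
    CoendData.desc_gen _ (Rcomp k F N N' c)
      (fun {p q} β y => Rrel k F N N' c β y) xy (h ⊗ₜ t)
  rw [h0, Rcomp_eq k F N N' c xy h g hg t]

lemma RL_gen (uv : C × C) (g : (uv.1 ⊗ uv.2 : C) ⟶ c)
    (t : (N.obj (F.obj uv.1) : Type u) ⊗[k] (N'.obj (F.obj uv.2) : Type u)) :
    Rmap k F N N' c (Lmap k F N N' c ((laxSrcData k F N N' c).gen uv (g ⊗ₜ t)))
      = (laxSrcData k F N N' c).gen uv (g ⊗ₜ t) := by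
  rw [Lmap_gen]
  set γ₁ : preC F (F.obj uv.1) ⟶ uv.1 := F.preimage (epsIso F (F.obj uv.1)).hom with hγ₁
  set γ₂ : preC F (F.obj uv.2) ⟶ uv.2 := F.preimage (epsIso F (F.obj uv.2)).hom with hγ₂
  have hkey : F.map ((γ₁ ⊗ₘ γ₂) ≫ g)
      = conjMap k F c (F.obj uv.1) (F.obj uv.2)
          (Functor.LaxMonoidal.μ F uv.1 uv.2 ≫ F.map g) := by
    have hmu : F.map (γ₁ ⊗ₘ γ₂)
        = Functor.OplaxMonoidal.δ F (preC F (F.obj uv.1)) (preC F (F.obj uv.2))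
          ≫ (F.map γ₁ ⊗ₘ F.map γ₂) ≫ Functor.LaxMonoidal.μ F uv.1 uv.2 := by
      rw [Functor.LaxMonoidal.μ_natural, Functor.Monoidal.δ_μ_assoc]
    rw [F.map_comp, hmu, conjMap_apply, hγ₁, hγ₂, F.map_preimage, F.map_preimage]
    simp only [Category.assoc]
  rw [Rmap_gen k F N N' c (F.obj uv.1, F.obj uv.2)
      (Functor.LaxMonoidal.μ F uv.1 uv.2 ≫ F.map g) ((γ₁ ⊗ₘ γ₂) ≫ g) hkey t]
  have hrel := src_rel k F N N' c
    (p := uv) (q := (preC F (F.obj uv.1), preC F (F.obj uv.2)))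
    ((γ₁, γ₂) : ((preC F (F.obj uv.1), preC F (F.obj uv.2)) : C × C) ⟶ uv)
    g (transp k F N N' (F.obj uv.1) (F.obj uv.2) t)
  rw [hrel, hγ₁, hγ₂, F.map_preimage, F.map_preimage,
    transp_section k F N N' (F.obj uv.1) (F.obj uv.2) t]

lemma LR_gen (xy : D × D) (h : (xy.1 ⊗ xy.2 : D) ⟶ F.obj c)
    (t : (N.obj xy.1 : Type u) ⊗[k] (N'.obj xy.2 : Type u)) :
    Lmap k F N N' c (Rmap k F N N' c ((laxTgtData k F N N' c).gen xy (h ⊗ₜ t)))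
      = (laxTgtData k F N N' c).gen xy (h ⊗ₜ t) := by
  set gp : (preC F xy.1 ⊗ preC F xy.2 : C) ⟶ c
    := F.preimage (conjMap k F c xy.1 xy.2 h) with hgp
  have hFgp : F.map gp = conjMap k F c xy.1 xy.2 h := F.map_preimage _
  rw [Rmap_gen k F N N' c xy h gp hFgp t, Lmap_gen]
  have hh : Functor.LaxMonoidal.μ F (preC F xy.1) (preC F xy.2) ≫ F.map gp
      = (((epsIso F xy.1).hom ⊗ₘ (epsIso F xy.2).hom)) ≫ h := by
    rw [hFgp, conjMap_apply]
    simp only [Category.assoc]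
    rw [Functor.Monoidal.μ_δ_assoc]
  rw [hh]
  have hrel := tgt_rel k F N N' c
    (p := xy) (q := (F.obj (preC F xy.1), F.obj (preC F xy.2)))
    (((epsIso F xy.1).hom, (epsIso F xy.2).hom) :
      ((F.obj (preC F xy.1), F.obj (preC F xy.2)) : D × D) ⟶ xy)
    h (transp k F N N' xy.1 xy.2 t)
  rw [hrel, transp_section k F N N' xy.1 xy.2 t]

lemma RL : (Rmap k F N N' c).comp (Lmap k F N N' c) = LinearMap.id := by
  refine CoendData.hom_ext' _ (fun uv => ?_)
  apply TensorProduct.ext'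
  intro g t
  exact RL_gen k F N N' c uv g t

lemma LR : (Lmap k F N N' c).comp (Rmap k F N N' c) = LinearMap.id := by
  refine CoendData.hom_ext' _ (fun xy => ?_)
  apply TensorProduct.ext'
  intro h t
  exact LR_gen k F N N' c xy h t

end AuxDefs

end StatementNineAux

/-- **The lax structure map of `F*` is invertible.**  For `F` full and essentially
surjective (between rigid `k`-linear tensor categories), the canonical map
`λ_{N,N'} : (F*N ⊗_C F*N')(c) ⟶ F*(N ⊗_D N')(c)`, `[g, n, n']_{(u,v)} ↦
[μ_{u,v} ≫ F g, n, n']_{(Fu,Fv)}`, is a `k`-linear isomorphism for every `c`. -/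
theorem lax_structure_map_iso (hFull : F.Full) (hEssSurj : F.EssSurj)
    (N N' : D ⥤ ModuleCat.{u} k)
    [N.Additive] [N.Linear k] [N'.Additive] [N'.Linear k] :
    ∃ e : ∀ c : C, (laxSrcData k F N N' c).Coend ≃ₗ[k] (laxTgtData k F N N' c).Coend,
      ∀ (c u v : C) (g : (u ⊗ v : C) ⟶ c)
        (n : N.obj (F.obj u)) (n' : N'.obj (F.obj v)),
        e c ((laxSrcData k F N N' c).gen (u, v)
            (show (((u ⊗ v : C) ⟶ c) ⊗[k]
                ((N.obj (F.obj u) : Type u) ⊗[k] (N'.obj (F.obj v) : Type u))) from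
              g ⊗ₜ (n ⊗ₜ n'))) =
          (laxTgtData k F N N' c).gen (F.obj u, F.obj v)
            (show (((F.obj u ⊗ F.obj v : D) ⟶ F.obj c) ⊗[k]
                ((N.obj (F.obj u) : Type u) ⊗[k] (N'.obj (F.obj v) : Type u))) from
              (Functor.LaxMonoidal.μ F u v ≫ F.map g) ⊗ₜ (n ⊗ₜ n')) := by
  haveI := hFull
  haveI := hEssSurj
  refine ⟨fun c => LinearEquiv.ofLinear (Lmap k F N N' c) (Rmap k F N N' c)
    (LR k F N N' c) (RL k F N N' c), ?_⟩
  intro c u v g n n'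
  have h := Lmap_gen k F N N' c (u, v) g (n ⊗ₜ n')
  simpa using h


end Lax
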